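/- The number 1 is a simple root of the characteristic polynomial p, and every complex root z of p with z ≠ 1 satisfies |z| < 1. -/

import Mathlib

open Polynomial Finset

lemma stmt11_shift1 {M : Type*} [AddCommMonoid M] (g : ℕ → M) (n : ℕ) :
    ∑ k ∈ Finset.range (n + 1), g k = g 0 + ∑ k ∈ Finset.range n, g (k + 1) := by
  rw [Finset.sum_range_succ']; exact add_comm _ _

lemma stmt11_shift2 {M : Type*} [AddCommMonoid M] (g : ℕ → M) (n : ℕ) :
    ∑ k ∈ Finset.range (n + 2), g k = g 0 + g 1 + ∑ k ∈ Finset.range n, g (k + 2) := by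
  rw [stmt11_shift1, stmt11_shift1, ← add_assoc]

lemma stmt11_aux (z : ℂ) (hz : 1 ≤ ‖z‖) (j : ℕ) :
    ‖1 - z ^ (j + 1)‖ ≤ ((j : ℝ) + 1) * ‖1 - z‖ * ‖z‖ ^ j := by
  induction j with
  | zero => simp
  | succ i ih =>
    have h1 : (1 : ℂ) - z ^ (i + 2) = (1 - z) + z * (1 - z ^ (i + 1)) := by ring
    have h2 := norm_add_le (1 - z) (z * (1 - z ^ (i + 1)))
    rw [norm_mul] at h2
    have h3 : (0 : ℝ) < ‖z‖ := lt_of_lt_of_le one_pos hz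
    have h4 : (1 : ℝ) ≤ ‖z‖ ^ (i + 1) := one_le_pow₀ hz
    have h5 : (0 : ℝ) ≤ ‖1 - z‖ := norm_nonneg _
    have key : ‖1 - z‖ + ‖z‖ * ‖1 - z ^ (i + 1)‖ ≤
        ((i : ℝ) + 1 + 1) * ‖1 - z‖ * ‖z‖ ^ (i + 1) := by
      have h6 := mul_le_mul_of_nonneg_left ih h3.le
      have h7 := mul_le_mul_of_nonneg_left h4 h5
      have h8 : ‖z‖ * ((↑i + 1) * ‖1 - z‖ * ‖z‖ ^ i)
          = ((i : ℝ) + 1) * ‖1 - z‖ * ‖z‖ ^ (i + 1) := by ring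
      rw [h8] at h6
      linarith
    have : (1 : ℂ) - z ^ (i + 1 + 1) = (1 : ℂ) - z ^ (i + 2) := by norm_num
    rw [this, h1]
    push_cast
    exact h2.trans key

theorem stmt_11 (m : ℕ) (hm : 2 ≤ m) (f : ℕ → ℝ)
    (hfnonneg : ∀ k, 0 ≤ f k) (hfsum : ∑ k ∈ Finset.range (m + 1), f k = 1)
    (hf0 : 0 < f 0) (hfm : 0 < f m)
    (hmean : ∑ k ∈ Finset.range (m + 1), (k : ℝ) * f k < 1)
    (α : ℕ → ℝ)
    (hα0 : α 0 = (1 - f 1) / f 0)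
    (hαk : ∀ k, 1 ≤ k → k ≤ m - 1 → α k = -(f (k + 1)) / f 0)
    (p : Polynomial ℝ)
    (hp : p = X ^ m - ∑ k ∈ Finset.range m, C (α k) * X ^ (m - 1 - k)) :
    p.rootMultiplicity 1 = 1 ∧
    (∀ z : ℂ, Polynomial.aeval z p = 0 → z ≠ 1 → ‖z‖ < 1) := by
  obtain ⟨n, rfl⟩ : ∃ n, m = n + 2 := ⟨m - 2, by omega⟩
  have hf0' : f 0 ≠ 0 := ne_of_gt hf0
  -- rearranged hypotheses
  rw [show n + 2 + 1 = n + 1 + 2 from rfl, stmt11_shift2] at hfsum hmean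
  have heval1 : p.eval 1 = 1 - ∑ k ∈ Finset.range (n + 2), α k := by
    simp [hp, eval_finset_sum]
  have hd : p.derivative.eval 1 =
      ((n : ℝ) + 2) - ∑ k ∈ Finset.range (n + 2), α k * ((n + 1 - k : ℕ) : ℝ) := by
    simp [hp, derivative_sum, derivative_C_mul, derivative_X_pow, eval_finset_sum]
    ring
  -- shifted alpha sums
  have hα1 : ∀ k ∈ Finset.range (n + 1), α (k + 1) = -(f (k + 2)) / f 0 := by
    intro k hk
    have hk' := Finset.mem_range.mp hk
    rw [hαk (k + 1) (by omega) (by omega)]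
  have hsumα : ∑ k ∈ Finset.range (n + 2), α k = 1 := by
    rw [stmt11_shift1, hα0, Finset.sum_congr rfl hα1]
    rw [← Finset.sum_div, Finset.sum_neg_distrib]
    field_simp
    linarith
  have hroot1 : p.IsRoot 1 := by
    rw [IsRoot, heval1, hsumα]; ring
  -- derivative value
  set S := ∑ k ∈ Finset.range (n + 1), f (k + 2) with hS
  set T := ∑ k ∈ Finset.range (n + 1), (k : ℝ) * f (k + 2) with hT
  have hmean' : f 1 + (T + 2 * S) < 1 := by
    have e2 : ∀ k ∈ Finset.range (n + 1), ((k + 2 : ℕ) : ℝ) * f (k + 2)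
        = (k : ℝ) * f (k + 2) + 2 * f (k + 2) := by
      intro k _; push_cast; ring
    rw [Finset.sum_congr rfl e2, Finset.sum_add_distrib, ← Finset.mul_sum] at hmean
    push_cast at hmean
    linarith
  have hfsum' : f 0 + f 1 + S = 1 := hfsum
  have hd2 : p.derivative.eval 1
      = ((n : ℝ) + 2) - ((1 - f 1) * ((n : ℝ) + 1) + (-(n : ℝ) * S + T)) / f 0 := by
    rw [hd, stmt11_shift1]
    have e : ∀ k ∈ Finset.range (n + 1), α (k + 1) * ((n + 1 - (k + 1) : ℕ) : ℝ)
        = (-(n : ℝ) * f (k + 2) + (k : ℝ) * f (k + 2)) / f 0 := by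
      intro k hk
      have hk' := Finset.mem_range.mp hk
      rw [hα1 k hk, show n + 1 - (k + 1) = n - k from by omega, Nat.cast_sub (by omega)]
      field_simp
      ring
    rw [Finset.sum_congr rfl e, ← Finset.sum_div, Finset.sum_add_distrib, ← Finset.mul_sum,
      hα0, ← hS, ← hT]
    rw [show ((n + 1 - 0 : ℕ) : ℝ) = (n : ℝ) + 1 from by push_cast; ring]
    field_simp
  have hmul : (n : ℝ) * f 0 + (n : ℝ) * f 1 + (n : ℝ) * S = (n : ℝ) := by
    have := congrArg (fun x => (n : ℝ) * x) hfsum'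
    simpa [mul_add] using this
  have hdpos : 0 < p.derivative.eval 1 := by
    rw [hd2, sub_pos, div_lt_iff₀ hf0]
    nlinarith [hmul, hmean', hfsum']
  have hp0 : p ≠ 0 := by
    intro h
    rw [h] at hdpos
    simp at hdpos
  have hrm : p.rootMultiplicity 1 = 1 := by
    have h1 : 0 < p.rootMultiplicity 1 := (rootMultiplicity_pos hp0).mpr hroot1
    have h2 : p.rootMultiplicity 1 - 1 = 0 := by
      rw [← derivative_rootMultiplicity_of_root hroot1]
      exact rootMultiplicity_eq_zero (by simp [IsRoot]; linarith)
    omega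
  refine ⟨hrm, ?_⟩
  intro z hz hz1
  by_contra habs
  push_neg at habs
  have hc : 0 < ‖1 - z‖ := by
    rw [norm_pos_iff]
    intro h
    exact hz1 (sub_eq_zero.mp h).symm
  have hzroot : z ^ (n + 2) = ∑ k ∈ Finset.range (n + 2), (α k : ℂ) * z ^ (n + 1 - k) := by
    rw [hp] at hz
    simp only [map_sub, map_pow, aeval_X, map_sum, map_mul, aeval_C,
      Complex.coe_algebraMap] at hz
    rw [sub_eq_zero] at hz
    exact hz
  have hz2 : (f 0 : ℂ) * z ^ (n + 2)
      = ((1 - f 1 : ℝ) : ℂ) * z ^ (n + 1)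
        - ∑ k ∈ Finset.range (n + 1), (f (k + 2) : ℂ) * z ^ (n - k) := by
    rw [hzroot, Finset.mul_sum, stmt11_shift1]
    have e1 : ∀ k ∈ Finset.range (n + 1),
        (f 0 : ℂ) * ((α (k + 1) : ℂ) * z ^ (n + 1 - (k + 1)))
        = -((f (k + 2) : ℂ) * z ^ (n - k)) := by
      intro k hk
      rw [hα1 k hk, show n + 1 - (k + 1) = n - k from by omega]
      have hf0c : (f 0 : ℂ) ≠ 0 := Complex.ofReal_ne_zero.mpr hf0'
      push_cast
      field_simp
    have e0 : (f 0 : ℂ) * ((α 0 : ℂ) * z ^ (n + 1 - 0))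
        = ((1 - f 1 : ℝ) : ℂ) * z ^ (n + 1) := by
      rw [hα0, show n + 1 - 0 = n + 1 from rfl]
      have hf0c : (f 0 : ℂ) ≠ 0 := Complex.ofReal_ne_zero.mpr hf0'
      push_cast
      field_simp
    rw [Finset.sum_congr rfl e1, Finset.sum_neg_distrib, e0]
    ring
  have hE : ∑ j ∈ Finset.range (n + 1 + 2), (f j : ℂ) * z ^ (n + 2 - j) = z ^ (n + 1) := by
    rw [stmt11_shift2]
    have e2 : ∀ j ∈ Finset.range (n + 1), (f (j + 2) : ℂ) * z ^ (n + 2 - (j + 2))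
        = (f (j + 2) : ℂ) * z ^ (n - j) := by
      intro j _
      rw [show n + 2 - (j + 2) = n - j from by omega]
    rw [Finset.sum_congr rfl e2,
      show n + 2 - 0 = n + 2 from rfl, show n + 2 - 1 = n + 1 from rfl, hz2]
    push_cast
    ring
  have hone : ∑ j ∈ Finset.range (n + 1 + 2), (f j : ℂ) = 1 := by
    rw [stmt11_shift2]
    have : ((f 0 : ℝ) : ℂ) + (f 1 : ℂ) + ∑ j ∈ Finset.range (n + 1), (f (j + 2) : ℂ)
        = ((f 0 + f 1 + ∑ j ∈ Finset.range (n + 1), f (j + 2) : ℝ) : ℂ) := by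
      push_cast
      ring
    rw [this]
    rw [show f 0 + f 1 + ∑ j ∈ Finset.range (n + 1), f (j + 2) = 1 from hfsum']
    norm_num
  have hkey : ∑ j ∈ Finset.range (n + 1 + 2), (f j : ℂ) * z ^ (n + 2 - j) * (1 - z ^ j)
      = z ^ (n + 1) - z ^ (n + 2) := by
    have e3 : ∀ j ∈ Finset.range (n + 1 + 2), (f j : ℂ) * z ^ (n + 2 - j) * (1 - z ^ j)
        = (f j : ℂ) * z ^ (n + 2 - j) - (f j : ℂ) * z ^ (n + 2) := by
      intro j hj
      have hj' := Finset.mem_range.mp hj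
      rw [mul_sub, mul_one, mul_assoc, ← pow_add, show n + 2 - j + j = n + 2 from by omega]
    rw [Finset.sum_congr rfl e3, Finset.sum_sub_distrib, hE, ← Finset.sum_mul, hone, one_mul]
  have hterm : ∀ j ∈ Finset.range (n + 1 + 2),
      ‖(f j : ℂ) * z ^ (n + 2 - j) * (1 - z ^ j)‖
      ≤ (j : ℝ) * f j * (‖1 - z‖ * ‖z‖ ^ (n + 1)) := by
    intro j hj
    have hj' := Finset.mem_range.mp hj
    rw [norm_mul, norm_mul, norm_pow, Complex.norm_of_nonneg (hfnonneg j)]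
    rcases Nat.eq_zero_or_pos j with h0 | h1
    · subst h0; simp
    · obtain ⟨i, rfl⟩ : ∃ i, j = i + 1 := ⟨j - 1, by omega⟩
      have haux := stmt11_aux z habs i
      have hpow : ‖z‖ ^ (n + 1 - i) * ‖z‖ ^ i
          = ‖z‖ ^ (n + 1) := by
        rw [← pow_add, show n + 1 - i + i = n + 1 from by omega]
      push_cast
      calc f (i + 1) * ‖z‖ ^ (n + 1 - i) * ‖1 - z ^ (i + 1)‖
          ≤ f (i + 1) * ‖z‖ ^ (n + 1 - i)
            * (((i : ℝ) + 1) * ‖1 - z‖ * ‖z‖ ^ i) := by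
            apply mul_le_mul_of_nonneg_left haux
            have := hfnonneg (i + 1)
            positivity
        _ = ((i : ℝ) + 1) * f (i + 1) * (‖1 - z‖ * ‖z‖ ^ (n + 1)) := by
            rw [← hpow]; ring
  have hμlt : ∑ j ∈ Finset.range (n + 1 + 2), (j : ℝ) * f j < 1 := by
    rw [stmt11_shift2]
    have e2' : ∀ k ∈ Finset.range (n + 1), ((k + 2 : ℕ) : ℝ) * f (k + 2)
        = (k : ℝ) * f (k + 2) + 2 * f (k + 2) := by
      intro k _; push_cast; ring
    rw [Finset.sum_congr rfl e2', Finset.sum_add_distrib, ← Finset.mul_sum, ← hT, ← hS]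
    push_cast
    linarith
  have hXpos : 0 < ‖1 - z‖ * ‖z‖ ^ (n + 1) := by
    apply mul_pos hc
    have : (0 : ℝ) < ‖z‖ := lt_of_lt_of_le one_pos habs
    positivity
  have hfinal : ‖1 - z‖ * ‖z‖ ^ (n + 1)
      ≤ (∑ j ∈ Finset.range (n + 1 + 2), (j : ℝ) * f j)
        * (‖1 - z‖ * ‖z‖ ^ (n + 1)) := by
    calc ‖1 - z‖ * ‖z‖ ^ (n + 1)
        = ‖z ^ (n + 1) - z ^ (n + 2)‖ := by
          rw [show z ^ (n + 1) - z ^ (n + 2) = z ^ (n + 1) * (1 - z) from by ring,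
            norm_mul, norm_pow]
          ring
      _ = ‖∑ j ∈ Finset.range (n + 1 + 2),
            (f j : ℂ) * z ^ (n + 2 - j) * (1 - z ^ j)‖ := by rw [hkey]
      _ ≤ ∑ j ∈ Finset.range (n + 1 + 2),
            ‖(f j : ℂ) * z ^ (n + 2 - j) * (1 - z ^ j)‖ :=
          norm_sum_le _ _
      _ ≤ ∑ j ∈ Finset.range (n + 1 + 2),
            (j : ℝ) * f j * (‖1 - z‖ * ‖z‖ ^ (n + 1)) :=
          Finset.sum_le_sum hterm
      _ = (∑ j ∈ Finset.range (n + 1 + 2), (j : ℝ) * f j)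
            * (‖1 - z‖ * ‖z‖ ^ (n + 1)) := by
          rw [← Finset.sum_mul]
  have := mul_lt_mul_of_pos_right hμlt hXpos
  linarith
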